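/- (Hard Lefschetz, linear algebra version) For every integer i with 0 ≤ i ≤ n, the (n−i)-th power of X_+ restricts to a linear isomorphism from Λ^iW onto Λ^{2n−i}W. -/

import Mathlib

/- Concrete model of the exterior algebra Λ^•(W) for W = ℂ^{2n}:
   an element is a coordinate function on the basis {χ_S}, S ⊆ {1,…,2n}. -/

open scoped Classical
open Matrix

noncomputable section

/-- Model of Λ^•(ℂ^N): coordinates with respect to the basis of wedge monomials. -/
abbrev Fock (N : ℕ) := Finset (Fin N) → ℂ

/-- The Koszul sign (−1)^{#{j ∈ S : j < i}}. -/
def sgn {N : ℕ} (i : Fin N) (S : Finset (Fin N)) : ℂ :=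
  (-1) ^ (S.filter (fun j => j < i)).card

/-- Generic "matrix-element" operator used to define creation/annihilation. -/
def fockOp {N : ℕ} (c : Finset (Fin N) → ℂ) (g : Finset (Fin N) → Finset (Fin N)) :
    Module.End ℂ (Fock N) where
  toFun f := fun S => c S * f (g S)
  map_add' f₁ f₂ := by funext S; simp [Pi.add_apply, mul_add]
  map_smul' r f := by funext S; simp [Pi.smul_apply, smul_eq_mul]; ring

/-- Left exterior multiplication by the basis vector indexed by `i`. -/
def wedgeOp {N : ℕ} (i : Fin N) : Module.End ℂ (Fock N) :=
  fockOp (fun S => if i ∈ S then sgn i S else 0) (fun S => S.erase i)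

/-- Contraction (interior product) by the dual basis vector indexed by `i`. -/
def contrOp {N : ℕ} (i : Fin N) : Module.End ℂ (Fock N) :=
  fockOp (fun S => if i ∈ S then 0 else sgn i S) (fun S => insert i S)

/-- The homogeneous component Λ^i(ℂ^N). -/
def degSub (N i : ℕ) : Submodule ℂ (Fock N) where
  carrier := {f | ∀ S : Finset (Fin N), S.card ≠ i → f S = 0}
  add_mem' := by intro f g hf hg S hS; simp [Pi.add_apply, hf S hS, hg S hS]
  zero_mem' := by intro S hS; rfl
  smul_mem' := by intro c f hf S hS; simp [Pi.smul_apply, hf S hS]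

/-- Index of the basis vector e_i of W = ℂ^{2n}. -/
def eIdx (n : ℕ) (i : Fin n) : Fin (2*n) := ⟨i.val, by have := i.isLt; omega⟩

/-- Index of the basis vector f_i of W = ℂ^{2n}. -/
def fIdx (n : ℕ) (i : Fin n) : Fin (2*n) := ⟨n + i.val, by have := i.isLt; omega⟩

/-- X₊ : left multiplication by ω̂ = Σ e_i ∧ f_i. -/
def Xplus (n : ℕ) : Module.End ℂ (Fock (2*n)) :=
  ∑ i : Fin n, wedgeOp (eIdx n i) * wedgeOp (fIdx n i)

/-- X₋ = Σ ι_{e_i^*} ∘ ι_{f_i^*}. -/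
def Xminus (n : ℕ) : Module.End ℂ (Fock (2*n)) :=
  ∑ i : Fin n, contrOp (eIdx n i) * contrOp (fIdx n i)

/-- The Gram matrix of the standard symplectic form ω on ℂ^{2n}:
    ω(e_i, f_j) = δ_{ij}, ω(e_i,e_j) = ω(f_i,f_j) = 0. -/
def sympJ (n : ℕ) : Matrix (Fin (2*n)) (Fin (2*n)) ℂ :=
  Matrix.of fun a b => if a.val + n = b.val then 1 else if b.val + n = a.val then -1 else 0

/-- The derivation action of a matrix A on Λ^•(ℂ^N):
    A·(v₁∧⋯∧v_p) = Σ_j v₁∧⋯∧Av_j∧⋯∧v_p, i.e. Σ_{i,j} A_{ij} a_i a_j^*. -/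
def derAct {N : ℕ} (A : Matrix (Fin N) (Fin N) ℂ) : Module.End ℂ (Fock N) :=
  ∑ i : Fin N, ∑ j : Fin N, A i j • (wedgeOp i * contrOp j)

/-- The space of primitive i-forms P^i = Λ^i W ∩ ker X₋. -/
def Pprim (n i : ℕ) : Submodule ℂ (Fock (2*n)) :=
  degSub (2*n) i ⊓ LinearMap.ker (Xminus n)


namespace HL

variable {N : ℕ} {S : Finset (Fin N)}

lemma fockOp_apply (c : Finset (Fin N) → ℂ) (g) (f : Fock N) (S) :
    fockOp c g f S = c S * f (g S) := rfl

lemma sgn_erase_self (a : Fin N) (S : Finset (Fin N)) : sgn a (S.erase a) = sgn a S := by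
  unfold sgn
  congr 1
  rw [Finset.filter_erase, Finset.erase_eq_of_notMem]
  simp

lemma sgn_insert_self (a : Fin N) (S : Finset (Fin N)) : sgn a (insert a S) = sgn a S := by
  unfold sgn
  congr 1
  by_cases h : a ∈ S
  · rw [Finset.insert_eq_of_mem h]
  · rw [Finset.filter_insert]
    simp

lemma sgn_erase {a b : Fin N} (h : b ≠ a) (hb : b ∈ S) :
    sgn a (S.erase b) = (if b < a then -1 else 1) * sgn a S := by
  unfold sgn
  rw [Finset.filter_erase]
  by_cases hba : b < a
  · have hmem : b ∈ S.filter (fun j => j < a) := Finset.mem_filter.2 ⟨hb, hba⟩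
    obtain ⟨m, hm⟩ : ∃ m, (S.filter (fun j => j < a)).card = m + 1 :=
      ⟨(S.filter (fun j => j < a)).card - 1, by
        have := Finset.card_pos.2 ⟨b, hmem⟩; omega⟩
    rw [Finset.card_erase_of_mem hmem, hm, if_pos hba]
    simp [pow_succ]
  · rw [Finset.erase_eq_of_notMem (by simp [hba]), if_neg hba, one_mul]

lemma sgn_insert {a b : Fin N} (h : b ≠ a) (hb : b ∉ S) :
    sgn a (insert b S) = (if b < a then -1 else 1) * sgn a S := by
  have := sgn_erase (S := insert b S) h (Finset.mem_insert_self b S)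
  rw [Finset.erase_insert hb] at this
  by_cases hba : b < a <;> simp [hba] at this ⊢ <;> rw [this] <;> ring

lemma sgn_mul_self (a : Fin N) (S : Finset (Fin N)) : sgn a S * sgn a S = 1 := by
  unfold sgn
  rw [← mul_pow]
  norm_num


lemma end_ext {φ ψ : Module.End ℂ (Fock N)} (h : ∀ f S, φ f S = ψ f S) : φ = ψ :=
  LinearMap.ext fun f => funext fun S => h f S

lemma wedge_anticomm {a b : Fin N} (h : a ≠ b) :
    wedgeOp a * wedgeOp b = -(wedgeOp b * wedgeOp a) := by
  apply end_ext; intro f S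
  simp only [Module.End.mul_apply, LinearMap.neg_apply, Pi.neg_apply, wedgeOp, fockOp_apply]
  by_cases ha : a ∈ S <;> by_cases hb : b ∈ S <;>
    simp [Finset.mem_erase, ha, hb, h, h.symm]
  rw [Finset.erase_right_comm (a := b)]
  rw [sgn_erase h.symm hb, sgn_erase h ha]
  rcases lt_trichotomy a b with hlt | heq | hgt
  · simp [hlt, not_lt.2 hlt.le]; ring
  · exact absurd heq h
  · simp [hgt, not_lt.2 hgt.le]; ring

lemma contr_anticomm {a b : Fin N} (h : a ≠ b) :
    contrOp a * contrOp b = -(contrOp b * contrOp a) := by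
  apply end_ext; intro f S
  simp only [Module.End.mul_apply, LinearMap.neg_apply, Pi.neg_apply, contrOp, fockOp_apply]
  by_cases ha : a ∈ S <;> by_cases hb : b ∈ S <;>
    simp [Finset.mem_insert, ha, hb, h, h.symm]
  rw [Finset.insert_comm]
  rw [sgn_insert h.symm hb, sgn_insert h ha]
  rcases lt_trichotomy a b with hlt | heq | hgt
  · simp [hlt, not_lt.2 hlt.le]; ring
  · exact absurd heq h
  · simp [hgt, not_lt.2 hgt.le]; ring

lemma wedge_contr_anticomm {a b : Fin N} (h : a ≠ b) :
    wedgeOp a * contrOp b = -(contrOp b * wedgeOp a) := by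
  apply end_ext; intro f S
  simp only [Module.End.mul_apply, LinearMap.neg_apply, Pi.neg_apply, wedgeOp, contrOp, fockOp_apply]
  by_cases ha : a ∈ S <;> by_cases hb : b ∈ S <;>
    simp [Finset.mem_insert, Finset.mem_erase, ha, hb, h, h.symm]
  · rw [Finset.erase_insert_of_ne h.symm]
    rw [sgn_insert h.symm hb, sgn_erase h ha]
    rcases lt_trichotomy a b with hlt | heq | hgt
    · simp [hlt, not_lt.2 hlt.le]; ring
    · exact absurd heq h
    · simp [hgt, not_lt.2 hgt.le]; ring

lemma wedge_contr_self (a : Fin N) :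
    wedgeOp a * contrOp a + contrOp a * wedgeOp a = 1 := by
  apply end_ext; intro f S
  simp only [LinearMap.add_apply, Module.End.mul_apply, Module.End.one_apply, Pi.add_apply,
    wedgeOp, contrOp, fockOp_apply]
  by_cases ha : a ∈ S
  · simp [ha, Finset.mem_erase, Finset.insert_erase ha, sgn_erase_self, sgn_mul_self, mul_assoc,
      ← mul_assoc (sgn a S)]
  · simp [ha, Finset.erase_insert ha, sgn_insert_self, sgn_mul_self, ← mul_assoc (sgn a S)]

lemma number_apply (a : Fin N) (f : Fock N) (S) :
    (wedgeOp a * contrOp a) f S = if a ∈ S then f S else 0 := by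
  simp only [Module.End.mul_apply, wedgeOp, contrOp, fockOp_apply]
  by_cases ha : a ∈ S
  · simp [ha, Finset.mem_erase, Finset.insert_erase ha, sgn_erase_self, ← mul_assoc, sgn_mul_self]
  · simp [ha]

lemma pair_comm {R} [Ring R] {a b c d : R} (hca : c*a = -(a*c)) (hcb : c*b = -(b*c))
    (hda : d*a = -(a*d)) (hdb : d*b = -(b*d)) : (c*d)*(a*b) = (a*b)*(c*d) := by
  calc (c*d)*(a*b) = c*((d*a)*b) := by rw [mul_assoc, mul_assoc]
  _ = -(((c*a)*(d*b))) := by rw [hda]; noncomm_ring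
  _ = (a*c)*(d*b) := by rw [hca]; noncomm_ring
  _ = -((a*c)*(b*d)) := by rw [hdb]; noncomm_ring
  _ = -(a*((c*b)*d)) := by noncomm_ring
  _ = a*((b*c)*d) := by rw [hcb]; noncomm_ring
  _ = (a*b)*(c*d) := by noncomm_ring

lemma diag_comm {R} [Ring R] {ae af be bf : R}
    (hme : ae*be + be*ae = 1) (hmf : af*bf + bf*af = 1)
    (hx : ae*bf = -(bf*ae)) (hy : af*be = -(be*af)) :
    (be*bf)*(ae*af) - (ae*af)*(be*bf) = -1 + ae*be + af*bf := by
  have E1 : be*ae = 1 - ae*be := by rw [eq_sub_iff_add_eq, add_comm]; exact hme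
  have E2 : bf*af = 1 - af*bf := by rw [eq_sub_iff_add_eq, add_comm]; exact hmf
  have hx' : bf*ae = -(ae*bf) := by rw [hx, neg_neg]
  have k1 : (be*bf)*(ae*af) = -((1-ae*be)*(1-af*bf)) := by
    calc (be*bf)*(ae*af) = be*((bf*ae)*af) := by noncomm_ring
    _ = -((be*ae)*(bf*af)) := by rw [hx']; noncomm_ring
    _ = -((1-ae*be)*(1-af*bf)) := by rw [E1, E2]
  have k2 : (ae*af)*(be*bf) = -((ae*be)*(af*bf)) := by
    calc (ae*af)*(be*bf) = ae*((af*be)*bf) := by noncomm_ring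
    _ = -((ae*be)*(af*bf)) := by rw [hy]; noncomm_ring
  rw [k1, k2]; noncomm_ring

lemma contr_wedge_anticomm {a b : Fin N} (h : a ≠ b) :
    contrOp b * wedgeOp a = -(wedgeOp a * contrOp b) := by
  rw [wedge_contr_anticomm h, neg_neg]

-- index distinctness
lemma eIdx_ne_fIdx (n : ℕ) (j k : Fin n) : eIdx n j ≠ fIdx n k := by
  simp only [eIdx, fIdx, Ne, Fin.ext_iff]
  have := j.isLt; omega

lemma eIdx_ne_eIdx {n : ℕ} {j k : Fin n} (h : j ≠ k) : eIdx n j ≠ eIdx n k := by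
  have : j.val ≠ k.val := fun hh => h (Fin.ext hh)
  simp only [eIdx, Ne, Fin.ext_iff]
  exact this

lemma fIdx_ne_fIdx {n : ℕ} {j k : Fin n} (h : j ≠ k) : fIdx n j ≠ fIdx n k := by
  have : j.val ≠ k.val := fun hh => h (Fin.ext hh)
  simp only [fIdx, Ne, Fin.ext_iff]
  omega

lemma offdiag_comm {n : ℕ} {j k : Fin n} (h : j ≠ k) :
    (contrOp (eIdx n j) * contrOp (fIdx n j)) * (wedgeOp (eIdx n k) * wedgeOp (fIdx n k)) =
    (wedgeOp (eIdx n k) * wedgeOp (fIdx n k)) * (contrOp (eIdx n j) * contrOp (fIdx n j)) := by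
  apply pair_comm
  · exact contr_wedge_anticomm (eIdx_ne_eIdx h.symm)
  · exact contr_wedge_anticomm (eIdx_ne_fIdx n j k).symm
  · exact contr_wedge_anticomm (eIdx_ne_fIdx n k j)
  · exact contr_wedge_anticomm (fIdx_ne_fIdx h.symm)

lemma diag_comm' (n : ℕ) (j : Fin n) :
    (contrOp (eIdx n j) * contrOp (fIdx n j)) * (wedgeOp (eIdx n j) * wedgeOp (fIdx n j)) -
    (wedgeOp (eIdx n j) * wedgeOp (fIdx n j)) * (contrOp (eIdx n j) * contrOp (fIdx n j)) =
    -1 + wedgeOp (eIdx n j) * contrOp (eIdx n j) + wedgeOp (fIdx n j) * contrOp (fIdx n j) := by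
  apply diag_comm
  · exact wedge_contr_self _
  · exact wedge_contr_self _
  · exact wedge_contr_anticomm (eIdx_ne_fIdx n j j)
  · exact wedge_contr_anticomm (eIdx_ne_fIdx n j j).symm

lemma opid (n : ℕ) :
    Xminus n * Xplus n - Xplus n * Xminus n =
    (∑ j : Fin n, (wedgeOp (eIdx n j) * contrOp (eIdx n j)
      + wedgeOp (fIdx n j) * contrOp (fIdx n j))) - (n : ℂ) • (1 : Module.End ℂ (Fock (2*n))) := by
  unfold Xminus Xplus
  rw [Finset.sum_mul_sum, Finset.sum_mul_sum]
  rw [Finset.sum_comm (s := Finset.univ) (t := Finset.univ)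
    (f := fun k j => (wedgeOp (eIdx n k) * wedgeOp (fIdx n k)) *
      (contrOp (eIdx n j) * contrOp (fIdx n j)))]
  rw [← Finset.sum_sub_distrib]
  have key : ∀ j : Fin n,
      (∑ k : Fin n, (contrOp (eIdx n j) * contrOp (fIdx n j)) * (wedgeOp (eIdx n k) * wedgeOp (fIdx n k)))
      - (∑ k : Fin n, (wedgeOp (eIdx n k) * wedgeOp (fIdx n k)) * (contrOp (eIdx n j) * contrOp (fIdx n j)))
      = -1 + wedgeOp (eIdx n j) * contrOp (eIdx n j) + wedgeOp (fIdx n j) * contrOp (fIdx n j) := by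
    intro j
    rw [← Finset.sum_sub_distrib]
    rw [Finset.sum_eq_single j]
    · exact diag_comm' n j
    · intro k _ hk
      rw [offdiag_comm hk.symm, sub_self]
    · intro h; exact absurd (Finset.mem_univ j) h
  rw [Finset.sum_congr rfl (fun j _ => key j)]
  rw [Finset.sum_add_distrib]
  rw [Finset.sum_add_distrib]
  have : (n : ℂ) • (1 : Module.End ℂ (Fock (2*n))) = n • (1 : Module.End ℂ (Fock (2*n))) := by
    rw [Nat.cast_smul_eq_nsmul]
  rw [this]
  simp only [Finset.sum_const, Finset.card_univ, Fintype.card_fin, neg_smul, one_smul,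
    smul_neg, ← Finset.sum_add_distrib]
  abel_nf
  rw [Finset.sum_add_distrib]

lemma count_lemma (n : ℕ) (S : Finset (Fin (2*n))) :
    ∑ j : Fin n, ((if eIdx n j ∈ S then (1:ℂ) else 0) + (if fIdx n j ∈ S then (1:ℂ) else 0))
      = (S.card : ℂ) := by
  have hcard : (S.card : ℂ) = ∑ x : Fin (2*n), (if x ∈ S then (1:ℂ) else 0) := by
    rw [Finset.sum_ite_mem, Finset.univ_inter, Finset.sum_const, nsmul_eq_mul, mul_one]
  rw [hcard]
  have E : Fin n ⊕ Fin n ≃ Fin (2*n) := finSumFinEquiv.trans (finCongr (two_mul n).symm)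
  rw [← Fintype.sum_equiv (finSumFinEquiv.trans (finCongr (two_mul n).symm))
    (fun y => (if (finSumFinEquiv.trans (finCongr (two_mul n).symm)) y ∈ S then (1:ℂ) else 0))
    (fun x => if x ∈ S then (1:ℂ) else 0) (fun y => rfl)]
  rw [Fintype.sum_sum_type]
  rw [Finset.sum_add_distrib]
  congr 1

lemma comm_apply {n i : ℕ} {f : Fock (2*n)} (hf : f ∈ degSub (2*n) i) :
    Xminus n (Xplus n f) - Xplus n (Xminus n f) = ((i:ℂ) - (n:ℂ)) • f := by
  have h := congrArg (fun φ : Module.End ℂ (Fock (2*n)) => φ f) (opid n)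
  simp only [LinearMap.sub_apply, Module.End.mul_apply, LinearMap.smul_apply,
    Module.End.one_apply] at h
  rw [h]
  have hsum : (∑ j : Fin n, (wedgeOp (eIdx n j) * contrOp (eIdx n j)
      + wedgeOp (fIdx n j) * contrOp (fIdx n j))) f = (i : ℂ) • f := by
    funext S
    rw [LinearMap.sum_apply]
    rw [Finset.sum_apply]
    simp only [LinearMap.add_apply, Pi.add_apply, number_apply]
    have : ∀ j : Fin n,
        ((if eIdx n j ∈ S then f S else 0) + (if fIdx n j ∈ S then f S else 0))
        = ((if eIdx n j ∈ S then (1:ℂ) else 0) + (if fIdx n j ∈ S then (1:ℂ) else 0)) * f S := by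
      intro j; by_cases h1 : eIdx n j ∈ S <;> by_cases h2 : fIdx n j ∈ S <;> simp [h1, h2] <;> ring
    rw [Finset.sum_congr rfl (fun j _ => this j), ← Finset.sum_mul, count_lemma]
    by_cases hS : f S = 0
    · simp [hS, Pi.smul_apply]
    · have : S.card = i := by by_contra hne; exact hS (hf S hne)
      rw [this, Pi.smul_apply, smul_eq_mul]
  rw [hsum, ← sub_smul]

lemma deg_plus {n i : ℕ} {f : Fock (2*n)} (hf : f ∈ degSub (2*n) i) :
    Xplus n f ∈ degSub (2*n) (i+2) := by
  intro S hS
  unfold Xplus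
  rw [LinearMap.sum_apply, Finset.sum_apply]
  apply Finset.sum_eq_zero
  intro j _
  simp only [Module.End.mul_apply, wedgeOp, fockOp_apply]
  by_cases h1 : eIdx n j ∈ S
  · by_cases h2 : fIdx n j ∈ S.erase (eIdx n j)
    · have hne := (Finset.mem_erase.1 h2).1
      have h2' := (Finset.mem_erase.1 h2).2
      have hc1 : (S.erase (eIdx n j)).card = S.card - 1 := Finset.card_erase_of_mem h1
      have hc2 : ((S.erase (eIdx n j)).erase (fIdx n j)).card = (S.erase (eIdx n j)).card - 1 :=
        Finset.card_erase_of_mem h2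
      have hpos : 1 ≤ (S.erase (eIdx n j)).card := Finset.card_pos.2 ⟨_, h2⟩
      have : ((S.erase (eIdx n j)).erase (fIdx n j)).card ≠ i := by omega
      rw [hf _ this]
      ring
    · simp [h2]
  · simp [h1]

lemma deg_plus_pow {n i : ℕ} {f : Fock (2*n)} (hf : f ∈ degSub (2*n) i) (k : ℕ) :
    (Xplus n ^ k) f ∈ degSub (2*n) (i + 2*k) := by
  induction k with
  | zero => simpa using hf
  | succ m ih =>
    have : (Xplus n ^ (m+1)) f = Xplus n ((Xplus n ^ m) f) := by
      rw [pow_succ', Module.End.mul_apply]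
    rw [this]
    have := deg_plus ih
    have heq : i + 2*m + 2 = i + 2*(m+1) := by omega
    rwa [heq] at this

lemma deg_minus_strong {n i : ℕ} {f : Fock (2*n)} (hf : f ∈ degSub (2*n) i)
    (S : Finset (Fin (2*n))) (hS : S.card + 2 ≠ i) : (Xminus n) f S = 0 := by
  unfold Xminus
  rw [LinearMap.sum_apply, Finset.sum_apply]
  apply Finset.sum_eq_zero
  intro j _
  simp only [Module.End.mul_apply, contrOp, fockOp_apply]
  by_cases h1 : eIdx n j ∈ S
  · simp [h1]
  · by_cases h2 : fIdx n j ∈ insert (eIdx n j) S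
    · simp [h2]
    · have hfj : fIdx n j ∉ S := fun h => h2 (Finset.mem_insert_of_mem h)
      have hc1 : (insert (eIdx n j) S).card = S.card + 1 := Finset.card_insert_of_notMem h1
      have hc2 : (insert (fIdx n j) (insert (eIdx n j) S)).card = S.card + 2 := by
        rw [Finset.card_insert_of_notMem h2, hc1]
      have : (insert (fIdx n j) (insert (eIdx n j) S)).card ≠ i := by omega
      rw [hf _ this]
      simp [h1, h2]

lemma deg_minus {n i : ℕ} {f : Fock (2*n)} (hf : f ∈ degSub (2*n) i) :
    Xminus n f ∈ degSub (2*n) (i-2) := by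
  intro S hS
  by_cases h2 : 2 ≤ i
  · exact deg_minus_strong hf S (by omega)
  · exact deg_minus_strong hf S (by omega)

lemma minus_eq_zero {n i : ℕ} {f : Fock (2*n)} (hf : f ∈ degSub (2*n) i) (hi : i < 2) :
    Xminus n f = 0 := by
  funext S
  rw [deg_minus_strong hf S (by omega)]
  rfl

/-- the commutation constant -/
def cc (n i k : ℕ) : ℂ := (k:ℂ) * ((i:ℂ) + (k:ℂ) - 1 - (n:ℂ))

lemma cc_succ (n i k : ℕ) : cc n i (k+1) = cc n i k + (((i:ℕ) + 2*k : ℕ) : ℂ) - (n:ℂ) := by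
  unfold cc; push_cast; ring

lemma cc_zero (n i : ℕ) : cc n i 0 = 0 := by simp [cc]

lemma gcomm {n i : ℕ} {f : Fock (2*n)} (hf : f ∈ degSub (2*n) i) (k : ℕ) :
    Xminus n ((Xplus n ^ k) f)
      = (Xplus n ^ k) (Xminus n f) + cc n i k • (Xplus n ^ (k-1)) f := by
  induction k with
  | zero => simp [cc_zero]
  | succ m ih =>
    have hg : (Xplus n ^ m) f ∈ degSub (2*n) (i + 2*m) := deg_plus_pow hf m
    have hpow : (Xplus n ^ (m+1)) f = Xplus n ((Xplus n ^ m) f) := by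
      rw [pow_succ', Module.End.mul_apply]
    rw [hpow]
    have hc := comm_apply hg
    have : Xminus n (Xplus n ((Xplus n ^ m) f))
        = Xplus n (Xminus n ((Xplus n ^ m) f))
          + (((i + 2*m : ℕ) : ℂ) - (n:ℂ)) • (Xplus n ^ m) f := by
      rw [← hc]; abel
    rw [this, ih, map_add, _root_.map_smul]
    have hXm : Xplus n ((Xplus n ^ m) (Xminus n f)) = (Xplus n ^ (m+1)) (Xminus n f) := by
      rw [pow_succ', Module.End.mul_apply]
    rw [hXm]
    rcases Nat.eq_zero_or_pos m with hm | hm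
    · subst hm
      simp [cc_zero, cc, pow_zero]
    · have hm1 : m - 1 + 1 = m := by omega
      have : Xplus n ((Xplus n ^ (m-1)) f) = (Xplus n ^ m) f := by
        conv_rhs => rw [← hm1]
        rw [pow_succ', Module.End.mul_apply]
      rw [this, cc_succ]
      have : m + 1 - 1 = m := by omega
      rw [this, add_assoc, ← add_smul]
      congr 2
      ring

lemma prim_pow {n i : ℕ} {f : Fock (2*n)} (hf : f ∈ degSub (2*n) i)
    (hprim : Xminus n f = 0) (k : ℕ) :
    (Xminus n ^ k) ((Xplus n ^ k) f)
      = (∏ t ∈ Finset.range k, cc n i (t+1)) • f := by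
  induction k with
  | zero => simp
  | succ m ih =>
    have h1 : (Xminus n ^ (m+1)) ((Xplus n ^ (m+1)) f)
        = (Xminus n ^ m) (Xminus n ((Xplus n ^ (m+1)) f)) := by
      rw [pow_succ, Module.End.mul_apply]
    rw [h1, gcomm hf (m+1), hprim]
    have : m + 1 - 1 = m := by omega
    rw [this, map_zero, zero_add, _root_.map_smul, ih, Finset.prod_range_succ, smul_smul]
    congr 1
    ring

lemma prod_ne_zero {n i k : ℕ} (hi : i ≤ n) (hk : k ≤ n - i) :
    (∏ t ∈ Finset.range k, cc n i (t+1)) ≠ 0 := by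
  rw [Finset.prod_ne_zero_iff]
  intro t ht
  unfold cc
  apply mul_ne_zero
  · exact Nat.cast_ne_zero.2 (Nat.succ_ne_zero t)
  · have hcast : ((i:ℂ) + ((t+1 : ℕ):ℂ) - 1 - (n:ℂ)) = (((i:ℤ) + t - n : ℤ) : ℂ) := by
      push_cast; ring
    rw [hcast]
    refine Int.cast_ne_zero.2 ?_
    have := Finset.mem_range.1 ht
    omega

lemma inj_lemma (n : ℕ) : ∀ i, i ≤ n → ∀ f ∈ degSub (2*n) i, (Xplus n ^ (n-i)) f = 0 → f = 0 := by
  intro i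
  induction i using Nat.strong_induction_on with
  | _ i IH =>
    intro hi f hf h0
    have hprim : Xminus n f = 0 := by
      rcases Nat.lt_or_ge i 2 with h2 | h2
      · exact minus_eq_zero hf h2
      · have hg := deg_minus hf
        apply IH (i-2) (by omega) (by omega) _ hg
        have e1 : (Xplus n ^ (n-i+2)) f = 0 := by
          have hpow : (n-i+2) = 2 + (n-i) := by omega
          rw [hpow, pow_add, Module.End.mul_apply, h0, map_zero]
        have e2 : (Xplus n ^ (n-i+1)) f = 0 := by
          have hpow : (n-i+1) = 1 + (n-i) := by omega
          rw [hpow, pow_add, Module.End.mul_apply, h0, map_zero]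
        have key := gcomm hf (n-i+2)
        rw [e1, map_zero] at key
        have h21 : n-i+2-1 = n-i+1 := by omega
        rw [h21, e2, smul_zero, add_zero] at key
        have hexp : n - (i-2) = n-i+2 := by omega
        rw [hexp]
        exact key.symm
    have hscal := prim_pow hf hprim (n-i)
    rw [h0, map_zero] at hscal
    rcases smul_eq_zero.1 hscal.symm with h | h
    · exact absurd h (prod_ne_zero hi (le_refl (n-i)))
    · exact h

/-- complementation gives a linear isomorphism Λ^i ≅ Λ^{N-i} -/
def complEquiv (N i : ℕ) (h : i ≤ N) : degSub N i ≃ₗ[ℂ] degSub N (N - i) where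
  toFun f := ⟨fun S => f.1 Sᶜ, by
    intro S hS
    apply f.2
    rw [Finset.card_compl, Fintype.card_fin]
    have := Finset.card_le_univ S
    rw [Fintype.card_fin] at this
    omega⟩
  map_add' f g := rfl
  map_smul' c f := rfl
  invFun g := ⟨fun S => g.1 Sᶜ, by
    intro S hS
    apply g.2
    rw [Finset.card_compl, Fintype.card_fin]
    have := Finset.card_le_univ S
    rw [Fintype.card_fin] at this
    omega⟩
  left_inv f := Subtype.ext (funext fun S => by simp)
  right_inv g := Subtype.ext (funext fun S => by simp)

end HL

/-- hard Lefschetz, linear algebra version: for 0 ≤ i ≤ n, the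
(n−i)-th power of X₊ restricts to a linear isomorphism Λ^iW ≃ Λ^{2n−i}W, i.e. it maps
Λ^iW onto Λ^{2n−i}W and is injective on Λ^iW. -/
theorem statement_16 (n i : ℕ) (hi : i ≤ n) :
    Submodule.map ((Xplus n) ^ (n - i)) (degSub (2*n) i) = degSub (2*n) (2*n - i) ∧
    ∀ f ∈ degSub (2*n) i, ((Xplus n) ^ (n - i)) f = 0 → f = 0 := by
  have hfd : FiniteDimensional ℂ (Fock (2*n)) := by infer_instance
  constructor
  · have hle : Submodule.map ((Xplus n) ^ (n-i)) (degSub (2*n) i) ≤ degSub (2*n) (2*n - i) := by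
      rintro y ⟨f, hf, rfl⟩
      have h := HL.deg_plus_pow hf (n-i)
      have heq : i + 2*(n-i) = 2*n - i := by omega
      rwa [heq] at h
    apply Submodule.eq_of_le_of_finrank_le hle
    have hinj : Function.Injective (((Xplus n) ^ (n-i)) ∘ₗ (degSub (2*n) i).subtype) := by
      have hker : ∀ x : ↥(degSub (2*n) i),
          (((Xplus n) ^ (n-i)) ∘ₗ (degSub (2*n) i).subtype) x = 0 → x = 0 := by
        intro x hx
        exact Subtype.ext (HL.inj_lemma n i hi x.1 x.2 hx)
      exact LinearMap.ker_eq_bot.1 (LinearMap.ker_eq_bot'.2 hker)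
    have hmap : Submodule.map ((Xplus n) ^ (n-i)) (degSub (2*n) i)
        = LinearMap.range (((Xplus n) ^ (n-i)) ∘ₗ (degSub (2*n) i).subtype) := by
      rw [LinearMap.range_comp, Submodule.range_subtype]
    have h3 : Module.finrank ℂ (Submodule.map ((Xplus n) ^ (n-i)) (degSub (2*n) i))
        = Module.finrank ℂ (degSub (2*n) i) := by
      rw [hmap]
      exact LinearMap.finrank_range_of_inj hinj
    have h1 : Module.finrank ℂ (degSub (2*n) (2*n - i))
        = Module.finrank ℂ (degSub (2*n) i) := by
      exact (LinearEquiv.finrank_eq (HL.complEquiv (2*n) i (by omega))).symm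
    rw [h1, h3]
  · intro f hf h0
    exact HL.inj_lemma n i hi f hf h0

end
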